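/- Let n ≥ 1, L ≥ 0, L' ≥ 1 and 1 ≤ F ≤ n be integers. Let f be a totally antisymmetric family of polynomials in ℂ[w₁,…,wₙ,v₁,…,vₙ] indexed by F-tuples from {1,…,n}, with each member bihomogeneous of bidegree (L, L'). Then there exists a unique pair (f⁰, g) such that: f⁰ is a totally antisymmetric family indexed by F-tuples with members bihomogeneous of bidegree (L, L') and trace-free (∑_{β=1}^n ∂_{v_β} f⁰(β,γ₂,…,γ_F) = 0 for all indices); g is a totally antisymmetric family indexed by (F−1)-tuples with members bihomogeneous of bidegree (L, L'−1) and trace-free (vacuously if F = 1); and f(γ₁,…,γ_F) = f⁰(γ₁,…,γ_F) + ∑_{k=1}^F (−1)^{k+1} v_{γ_k}·g(γ₁,…,γ̂_k,…,γ_F) for all index tuples. (This is the decomposition Φ₊ = Φ₊^{(1)} + (w̄^α χ^α)·Φ₊^{(2)} into βγ-traceless parts used in Appendix B of the paper.) -/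

import Mathlib

open MvPolynomial

noncomputable section

/-- Weight function giving the degree in the `w`-variables (indexed by `Sum.inl`). -/
def wWt (n : ℕ) : (Fin n ⊕ Fin n) → ℕ := Sum.elim (fun _ => 1) (fun _ => 0)

/-- Weight function giving the degree in the `v`-variables (indexed by `Sum.inr`). -/
def vWt (n : ℕ) : (Fin n ⊕ Fin n) → ℕ := Sum.elim (fun _ => 0) (fun _ => 1)

/-- A family of polynomials indexed by tuples is totally antisymmetric if permuting the
index tuple multiplies the value by the sign of the permutation. -/
def AntisymFam (n m : ℕ)
    (f : (Fin m → Fin n) → MvPolynomial (Fin n ⊕ Fin n) ℂ) : Prop :=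
  ∀ (σ : Equiv.Perm (Fin m)) (γ : Fin m → Fin n),
    f (γ ∘ σ) = (Equiv.Perm.sign σ : ℤ) • f γ

/-- A family is trace-free if the contraction `∑_β ∂_{v_β} f(… β …)` over any one of its
index slots vanishes (for a totally antisymmetric family this is equivalent to the
vanishing of the contraction over the first slot; it is vacuous if `m = 0`). -/
def TraceFreeFam (n m : ℕ)
    (f : (Fin m → Fin n) → MvPolynomial (Fin n ⊕ Fin n) ℂ) : Prop :=
  ∀ (γ : Fin m → Fin n) (i : Fin m),
    ∑ β : Fin n, pderiv (Sum.inr β) (f (Function.update γ i β)) = 0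

/-- The antisymmetrized family
`(v ∧ g)(γ₁,…,γ_F) = ∑_k (−1)^{k+1} v_{γ_k} g(γ₁,…,γ̂_k,…,γ_F)`. -/
def vWedge (n m : ℕ) (g : (Fin m → Fin n) → MvPolynomial (Fin n ⊕ Fin n) ℂ) :
    (Fin (m + 1) → Fin n) → MvPolynomial (Fin n ⊕ Fin n) ℂ :=
  fun γ => ∑ k : Fin (m + 1),
    (-1 : ℤ) ^ (k : ℕ) • (MvPolynomial.X (Sum.inr (γ k)) * g (γ ∘ k.succAbove))

namespace S14
open Finsupp Equiv Equiv.Perm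

variable {σ : Type*} [DecidableEq σ] [Fintype σ]

lemma pderiv_comm' {σ : Type*} [DecidableEq σ] (i j : σ) (p : MvPolynomial σ ℂ) :
    pderiv i (pderiv j p) = pderiv j (pderiv i p) := by
  induction p using MvPolynomial.induction_on' with
  | add p q hp hq => simp [map_add, hp, hq]
  | monomial m c =>
    rcases eq_or_ne i j with rfl | hij
    · rfl
    · simp only [pderiv_monomial]
      rw [Finsupp.tsub_apply, Finsupp.tsub_apply, Finsupp.single_eq_of_ne' hij,
        Finsupp.single_eq_of_ne' (Ne.symm hij), tsub_zero, tsub_zero, tsub_right_comm]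
      ring_nf

lemma weight_single_one (w : σ → ℕ) (i : σ) :
    Finsupp.weight w (Finsupp.single i 1) = w i := by
  simp [Finsupp.weight_apply, Finsupp.sum_single_index]

lemma isWeightedHomogeneous_pderiv {w : σ → ℕ} {d : ℕ} {p : MvPolynomial σ ℂ}
    (i : σ) (hp : p.IsWeightedHomogeneous w d) :
    (pderiv i p).IsWeightedHomogeneous w (d - w i) := by
  conv_lhs => rw [← p.support_sum_monomial_coeff]
  rw [map_sum]
  apply IsWeightedHomogeneous.sum
  intro m hm
  rw [pderiv_monomial]
  rcases eq_or_ne (m i) 0 with h0 | h0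
  · rw [h0]; push_cast; rw [mul_zero, monomial_zero]
    exact isWeightedHomogeneous_zero _ _ _
  · apply isWeightedHomogeneous_monomial
    have hw : Finsupp.weight w m = d := hp (MvPolynomial.mem_support_iff.mp hm)
    have hle : Finsupp.single i 1 ≤ m := by
      intro j
      rcases eq_or_ne j i with rfl | hji
      · simpa [Finsupp.single_eq_same] using Nat.one_le_iff_ne_zero.mpr h0
      · simp [Finsupp.single_eq_of_ne' (Ne.symm hji)]
    have : Finsupp.weight w (m - Finsupp.single i 1) + Finsupp.weight w (Finsupp.single i 1)
        = Finsupp.weight w m := by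
      rw [← map_add, tsub_add_cancel_of_le hle]
    rw [weight_single_one] at this
    omega

lemma weight_eq_sum (w : σ → ℕ) (m : σ →₀ ℕ) :
    Finsupp.weight w m = ∑ i : σ, m i * w i := by
  rw [Finsupp.weight_apply, Finsupp.sum_fintype]
  · simp [mul_comm]
  · intro i; simp

lemma X_mul_pderiv_monomial (i : σ) (m : σ →₀ ℕ) (c : ℂ) :
    X i * pderiv i (monomial m c) = (m i : ℂ) • monomial m c := by
  rw [pderiv_monomial]
  rcases eq_or_ne (m i) 0 with h0 | h0
  · rw [h0]; push_cast; rw [mul_zero, monomial_zero, mul_zero, zero_smul]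
  · have hle : Finsupp.single i 1 ≤ m := by
      intro j
      rcases eq_or_ne j i with rfl | hji
      · simpa [Finsupp.single_eq_same] using Nat.one_le_iff_ne_zero.mpr h0
      · simp [Finsupp.single_eq_of_ne' (Ne.symm hji)]
    rw [X, monomial_mul, one_mul, add_tsub_cancel_of_le hle, smul_monomial,
      smul_eq_mul, mul_comm]

lemma euler {w : σ → ℕ} {d : ℕ} {p : MvPolynomial σ ℂ}
    (hp : p.IsWeightedHomogeneous w d) :
    ∑ i : σ, (w i : ℂ) • (X i * pderiv i p) = (d : ℂ) • p := by
  conv_lhs => rw [← p.support_sum_monomial_coeff]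
  conv_rhs => rw [← p.support_sum_monomial_coeff]
  simp only [map_sum, Finset.mul_sum, Finset.smul_sum]
  rw [Finset.sum_comm]
  refine Finset.sum_congr rfl fun m hm => ?_
  have hw : Finsupp.weight w m = d := hp (MvPolynomial.mem_support_iff.mp hm)
  calc ∑ i : σ, (w i : ℂ) • (X i * pderiv i (monomial m (coeff m p)))
      = ∑ i : σ, ((m i * w i : ℕ) : ℂ) • monomial m (coeff m p) := by
        refine Finset.sum_congr rfl fun i _ => ?_
        rw [X_mul_pderiv_monomial, smul_smul]
        push_cast
        ring_nf
    _ = (d : ℂ) • monomial m (coeff m p) := by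
        rw [← Finset.sum_smul, ← Nat.cast_sum, ← weight_eq_sum, hw]


omit [DecidableEq σ] [Fintype σ] in
lemma exists_perm_succAbove {m : ℕ} (σ : Perm (Fin (m+1))) (k : Fin (m+1)) :
    ∃ τ : Perm (Fin m), (∀ i, σ (k.succAbove i) = (σ k).succAbove (τ i)) ∧
      (Perm.sign σ : ℤ) = (-1)^(k : ℕ) * (-1)^((σ k : ℕ)) * (Perm.sign τ : ℤ) := by
  set e : Perm (Fin (m+1)) := (σ k).cycleRange * σ * k.cycleRange⁻¹ with he
  have he0 : e 0 = 0 := by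
    simp only [he, Perm.mul_apply]
    rw [show (k.cycleRange⁻¹ : Perm (Fin (m+1))) 0 = k.cycleRange.symm 0 from rfl,
      Fin.cycleRange_symm_zero, Fin.cycleRange_self]
  set τ := (Equiv.Perm.decomposeFin e).2 with hτ
  have hfst : (Equiv.Perm.decomposeFin e).1 = 0 := by
    have := Equiv.Perm.decomposeFin_symm_apply_zero (Equiv.Perm.decomposeFin e).1
      (Equiv.Perm.decomposeFin e).2
    rw [Prod.mk.eta, Equiv.symm_apply_apply] at this
    rw [← this, he0]
  have hsymm : Equiv.Perm.decomposeFin.symm (0, τ) = e := by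
    rw [← hfst, hτ, Prod.mk.eta, Equiv.symm_apply_apply]
  have hesucc : ∀ i : Fin m, e i.succ = (τ i).succ := by
    intro i
    rw [← hsymm, Equiv.Perm.decomposeFin_symm_apply_succ, Equiv.swap_self]
    rfl
  refine ⟨τ, fun i => ?_, ?_⟩
  · have h1 : k.succAbove i = k.cycleRange.symm i.succ := (Fin.cycleRange_symm_succ k i).symm
    have h2 : (σ k).succAbove (τ i) = (σ k).cycleRange.symm (τ i).succ :=
      (Fin.cycleRange_symm_succ (σ k) (τ i)).symm
    rw [h1, h2, ← hesucc]
    simp only [he, Perm.mul_apply]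
    rw [show ((σ k).cycleRange : Perm (Fin (m+1))).symm ((σ k).cycleRange (σ (k.cycleRange⁻¹ i.succ))) = σ (k.cycleRange⁻¹ i.succ) from Equiv.symm_apply_apply _ _]
    rfl
  · have hse : Perm.sign e = Perm.sign τ := by
      rw [← hsymm, Equiv.Perm.decomposeFin.symm_sign, if_pos rfl, one_mul]
    have : Perm.sign e = Perm.sign ((σ k).cycleRange) * Perm.sign σ * Perm.sign (k.cycleRange⁻¹) := by
      rw [he]; simp [map_mul]
    rw [hse, Perm.sign_inv, Fin.sign_cycleRange, Fin.sign_cycleRange] at this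
    have h2 : ((Perm.sign τ : ℤˣ) : ℤ) = ((-1)^((σ k : ℕ)) * Perm.sign σ * (-1)^(k : ℕ) : ℤˣ) := by
      exact_mod_cast congrArg (fun u : ℤˣ => (u : ℤ)) this
    push_cast at h2
    rw [h2]; ring_nf
    rw [show (k:ℕ) * 2 = 2 * (k:ℕ) by ring, show (σ k:ℕ) * 2 = 2 * (σ k:ℕ) by ring,
      pow_mul, pow_mul]
    norm_num

lemma vWedge_antisym {n m : ℕ} {g : (Fin m → Fin n) → MvPolynomial (Fin n ⊕ Fin n) ℂ}
    (hg : AntisymFam n m g) : AntisymFam n (m+1) (vWedge n m g) := by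
  intro σ γ
  unfold vWedge
  rw [Finset.smul_sum]
  rw [← Equiv.sum_comp (σ : Equiv (Fin (m+1)) (Fin (m+1)))
    (fun k => (Equiv.Perm.sign σ : ℤ) •
      ((-1:ℤ)^(k:ℕ) • (MvPolynomial.X (Sum.inr (γ k)) * g (γ ∘ k.succAbove))))]
  refine Finset.sum_congr rfl fun k _ => ?_
  obtain ⟨τ, hτ, hsign⟩ := exists_perm_succAbove σ k
  have harg : (γ ∘ ⇑σ) ∘ (k.succAbove) = (γ ∘ ((σ k).succAbove)) ∘ ⇑τ := by
    funext i
    simp only [Function.comp_apply, hτ i]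
  have hγk : (γ ∘ ⇑σ) k = γ (σ k) := rfl
  rw [hγk, harg, hg τ (γ ∘ (σ k).succAbove), mul_smul_comm, smul_smul, smul_smul]
  congr 1
  rw [hsign]
  have h1 : ((-1:ℤ))^((σ k:ℕ)) * ((-1:ℤ))^((σ k:ℕ)) = 1 := by
    rw [← mul_pow]; norm_num
  linear_combination (-((-1:ℤ)^(k:ℕ)) * (Perm.sign τ : ℤ)) * h1

def Tr (n m : ℕ) (f : (Fin (m+1) → Fin n) → MvPolynomial (Fin n ⊕ Fin n) ℂ) :
    (Fin m → Fin n) → MvPolynomial (Fin n ⊕ Fin n) ℂ :=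
  fun γ' => ∑ β : Fin n, pderiv (Sum.inr β) (f (Fin.cons β γ'))

lemma cons_comp_decompose {n m : ℕ} (β : Fin n) (γ' : Fin m → Fin n) (σ : Perm (Fin m)) :
    Fin.cons β (γ' ∘ σ) = (Fin.cons β γ' : Fin (m+1) → Fin n) ∘
      (Equiv.Perm.decomposeFin.symm (0, σ)) := by
  funext j
  induction j using Fin.cases with
  | zero =>
    rw [Function.comp_apply, Equiv.Perm.decomposeFin_symm_apply_zero]
    rfl
  | succ i =>
    rw [Function.comp_apply, Equiv.Perm.decomposeFin_symm_apply_succ, Equiv.swap_self]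
    simp [Fin.cons_succ]

lemma Tr_antisym {n m : ℕ} {f : (Fin (m+1) → Fin n) → MvPolynomial (Fin n ⊕ Fin n) ℂ}
    (hf : AntisymFam n (m+1) f) : AntisymFam n m (Tr n m f) := by
  intro σ γ'
  unfold Tr
  rw [Finset.smul_sum]
  refine Finset.sum_congr rfl fun β _ => ?_
  rw [cons_comp_decompose, hf _ _, map_zsmul]
  congr 2
  rw [Equiv.Perm.decomposeFin.symm_sign, if_pos rfl, one_mul]

lemma Tr_traceFree {n m : ℕ} {f : (Fin (m+1) → Fin n) → MvPolynomial (Fin n ⊕ Fin n) ℂ}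
    (hf : AntisymFam n (m+1) f) : TraceFreeFam n m (Tr n m f) := by
  intro γ' i
  have key : ∀ α β : Fin n, f (Fin.cons α (Function.update γ' i β)) =
      - f (Fin.cons β (Function.update γ' i α)) := by
    intro α β
    have hcomp : (Fin.cons β (Function.update γ' i α) : Fin (m+1) → Fin n) ∘
        (Equiv.swap 0 i.succ) = Fin.cons α (Function.update γ' i β) := by
      funext j
      induction j using Fin.cases with
      | zero =>
        rw [Function.comp_apply, Equiv.swap_apply_left]
        simp
      | succ l =>
        rcases eq_or_ne l i with rfl | hl
        · rw [Function.comp_apply, Equiv.swap_apply_right]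
          simp
        · rw [Function.comp_apply,
            Equiv.swap_apply_of_ne_of_ne (Fin.succ_ne_zero l) (by simpa using hl)]
          simp [Fin.cons_succ, Function.update_of_ne hl]
    have h := hf (Equiv.swap 0 i.succ) (Fin.cons β (Function.update γ' i α))
    rw [hcomp] at h
    rw [h, Equiv.Perm.sign_swap (Ne.symm (Fin.succ_ne_zero i))]
    simp
  set S := ∑ β : Fin n, pderiv (Sum.inr β) (Tr n m f (Function.update γ' i β)) with hSdef
  have hS : S = ∑ β : Fin n, ∑ α : Fin n,
      pderiv (Sum.inr β) (pderiv (Sum.inr α) (f (Fin.cons α (Function.update γ' i β)))) := by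
    rw [hSdef]
    refine Finset.sum_congr rfl fun β _ => ?_
    rw [Tr, map_sum]
  have hSneg : S = -S := by
    conv_lhs => rw [hS]
    conv_rhs => rw [hS]
    rw [← Finset.sum_neg_distrib]
    rw [Finset.sum_comm]
    refine Finset.sum_congr rfl fun α _ => ?_
    rw [← Finset.sum_neg_distrib]
    refine Finset.sum_congr rfl fun β _ => ?_
    rw [key α β]
    rw [map_neg, map_neg, pderiv_comm']
  have h2 : S + S = 0 := by nth_rewrite 1 [hSneg]; exact neg_add_cancel S
  have h3 : (2 : ℂ) • S = 0 := by rw [two_smul]; exact h2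
  rcases smul_eq_zero.mp h3 with h | h
  · norm_num at h
  · exact h

lemma euler_v {n d : ℕ} {p : MvPolynomial (Fin n ⊕ Fin n) ℂ}
    (hp : p.IsWeightedHomogeneous (vWt n) d) :
    ∑ β : Fin n, X (Sum.inr β) * pderiv (Sum.inr β) p = (d : ℂ) • p := by
  have h := euler hp
  rw [Fintype.sum_sum_type] at h
  simpa [vWt] using h

lemma vWedge_cons {n m : ℕ} (g : (Fin m → Fin n) → MvPolynomial (Fin n ⊕ Fin n) ℂ)
    (β : Fin n) (γ' : Fin m → Fin n) :
    vWedge n m g (Fin.cons β γ') = X (Sum.inr β) * g γ' +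
      ∑ j : Fin m, (-1:ℤ)^((j:ℕ)+1) •
        (X (Sum.inr (γ' j)) * g ((Fin.cons β γ' : Fin (m+1) → Fin n) ∘ j.succ.succAbove)) := by
  rw [vWedge, Fin.sum_univ_succ]
  have h1 : (Fin.cons β γ' : Fin (m+1) → Fin n) ∘ (0 : Fin (m+1)).succAbove = γ' := by
    funext i
    rw [Function.comp_apply, Fin.zero_succAbove, Fin.cons_succ]
  congr 1
  rw [show ((0 : Fin (m+1)) : ℕ) = 0 from rfl, pow_zero, one_smul, Fin.cons_zero, h1]

lemma cons_comp_succAbove {n m : ℕ} (γ' : Fin (m+1) → Fin n) (j : Fin (m+1)) (β : Fin n) :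
    (Fin.cons β γ' : Fin (m+2) → Fin n) ∘ (j.succ.succAbove) =
      Function.update (γ' ∘ ⇑(j.cycleRange.symm)) 0 β := by
  funext i
  induction i using Fin.cases with
  | zero =>
    rw [Function.comp_apply, Fin.succ_succAbove_zero, Function.update_self]
    rfl
  | succ l =>
    rw [Function.comp_apply, Fin.succ_succAbove_succ, Fin.cons_succ,
      Function.update_of_ne (Fin.succ_ne_zero l), Function.comp_apply,
      Fin.cycleRange_symm_succ]

lemma Tr_vWedge {n m d : ℕ} {g : (Fin m → Fin n) → MvPolynomial (Fin n ⊕ Fin n) ℂ}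
    (hga : AntisymFam n m g) (hgt : TraceFreeFam n m g)
    (hgh : ∀ γ, (g γ).IsWeightedHomogeneous (vWt n) d) (γ' : Fin m → Fin n) :
    Tr n m (vWedge n m g) γ' = ((n : ℂ) + (d : ℂ) - (m : ℂ)) • g γ' := by
  have part1 : ∑ β : Fin n, pderiv (Sum.inr β) (X (Sum.inr β) * g γ')
      = ((n : ℂ) + (d : ℂ)) • g γ' := by
    have : ∀ β : Fin n, pderiv (Sum.inr β) (X (Sum.inr β) * g γ')
        = g γ' + X (Sum.inr β) * pderiv (Sum.inr β) (g γ') := by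
      intro β
      rw [pderiv_mul, pderiv_X_self, one_mul]
    rw [Finset.sum_congr rfl (fun β _ => this β), Finset.sum_add_distrib,
      euler_v (hgh γ'), Finset.sum_const, Finset.card_univ, Fintype.card_fin,
      add_smul, ← Nat.cast_smul_eq_nsmul ℂ]
  have part2 : ∑ β : Fin n, pderiv (Sum.inr β)
      (∑ j : Fin m, (-1:ℤ)^((j:ℕ)+1) •
        (X (Sum.inr (γ' j)) * g ((Fin.cons β γ' : Fin (m+1) → Fin n) ∘ j.succ.succAbove)))
      = (-(m : ℂ)) • g γ' := by
    cases m with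
    | zero => simp
    | succ m' =>
      have step : ∀ β : Fin n, pderiv (Sum.inr β)
          (∑ j : Fin (m'+1), (-1:ℤ)^((j:ℕ)+1) •
            (X (Sum.inr (γ' j)) * g ((Fin.cons β γ' : Fin (m'+2) → Fin n) ∘ j.succ.succAbove)))
          = ∑ j : Fin (m'+1), (-1:ℤ)^((j:ℕ)+1) •
            pderiv (Sum.inr β)
              (X (Sum.inr (γ' j)) * g (Function.update (γ' ∘ ⇑(j.cycleRange.symm)) 0 β)) := by
        intro β
        rw [map_sum]
        refine Finset.sum_congr rfl fun j _ => ?_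
        rw [map_zsmul, cons_comp_succAbove]
      rw [Finset.sum_congr rfl (fun β _ => step β), Finset.sum_comm]
      have inner : ∀ j : Fin (m'+1),
          ∑ β : Fin n, (-1:ℤ)^((j:ℕ)+1) •
            pderiv (Sum.inr β)
              (X (Sum.inr (γ' j)) * g (Function.update (γ' ∘ ⇑(j.cycleRange.symm)) 0 β))
          = (-1 : ℂ) • g γ' := by
        intro j
        set D := γ' ∘ ⇑(j.cycleRange.symm) with hD
        have hsum : ∑ β : Fin n, pderiv (Sum.inr β)
            (X (Sum.inr (γ' j)) * g (Function.update D 0 β))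
            = ((-1 : ℤ)^(j:ℕ)) • g γ' := by
          have expand : ∀ β : Fin n, pderiv (Sum.inr β)
              (X (Sum.inr (γ' j)) * g (Function.update D 0 β))
              = (if γ' j = β then (1 : MvPolynomial (Fin n ⊕ Fin n) ℂ) else 0) *
                  g (Function.update D 0 β)
                + X (Sum.inr (γ' j)) * pderiv (Sum.inr β) (g (Function.update D 0 β)) := by
            intro β
            rw [pderiv_mul, pderiv_X, Pi.single_apply]
            simp only [Sum.inr.injEq]
          rw [Finset.sum_congr rfl (fun β _ => expand β), Finset.sum_add_distrib,
            ← Finset.mul_sum, hgt D 0, mul_zero, add_zero]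
          have pick : ∑ β : Fin n, (if γ' j = β then (1 : MvPolynomial (Fin n ⊕ Fin n) ℂ) else 0) *
              g (Function.update D 0 β) = g (Function.update D 0 (γ' j)) := by
            rw [Finset.sum_congr rfl (fun β _ => by rw [ite_mul, one_mul, zero_mul])]
            rw [Finset.sum_ite_eq Finset.univ (γ' j)
              (fun β => g (Function.update D 0 β)), if_pos (Finset.mem_univ _)]
          rw [pick]
          have hD0 : γ' j = D 0 := by
            rw [hD, Function.comp_apply, Fin.cycleRange_symm_zero]
          rw [hD0, Function.update_eq_self]
          have := hga (j.cycleRange⁻¹) γ'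
          rw [Equiv.Perm.inv_def] at this
          rw [hD, this, show Equiv.symm j.cycleRange = j.cycleRange⁻¹ from rfl,
            Equiv.Perm.sign_inv, Fin.sign_cycleRange]
          norm_num [Units.val_pow_eq_pow_val]
        rw [← Finset.smul_sum, hsum, smul_smul]
        have hcoef : ((-1:ℤ)^((j:ℕ)+1) * (-1:ℤ)^(j:ℕ)) = -1 := by
          rw [pow_succ, mul_comm ((-1:ℤ)^(j:ℕ)) (-1), mul_assoc, ← mul_pow]
          norm_num
        rw [hcoef, ← Int.cast_smul_eq_zsmul ℂ]
        norm_num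
      rw [Finset.sum_congr rfl (fun j _ => inner j), Finset.sum_const, Finset.card_univ,
        Fintype.card_fin, ← Nat.cast_smul_eq_nsmul ℂ, smul_smul]
      push_cast
      ring_nf
  rw [Tr]
  calc ∑ β : Fin n, pderiv (Sum.inr β) (vWedge n m g (Fin.cons β γ'))
      = ∑ β : Fin n, (pderiv (Sum.inr β) (X (Sum.inr β) * g γ') +
          pderiv (Sum.inr β) (∑ j : Fin m, (-1:ℤ)^((j:ℕ)+1) •
            (X (Sum.inr (γ' j)) * g ((Fin.cons β γ' : Fin (m+1) → Fin n) ∘ j.succ.succAbove)))) := by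
        refine Finset.sum_congr rfl fun β _ => ?_
        rw [vWedge_cons, map_add]
    _ = ((n : ℂ) + (d : ℂ)) • g γ' + (-(m : ℂ)) • g γ' := by
        rw [Finset.sum_add_distrib, part1, part2]
    _ = ((n : ℂ) + (d : ℂ) - (m : ℂ)) • g γ' := by
        rw [← add_smul]; ring_nf


lemma zsmul_hom {n : ℕ} {w : (Fin n ⊕ Fin n) → ℕ} {d : ℕ} (z : ℤ)
    {p : MvPolynomial (Fin n ⊕ Fin n) ℂ} (hp : p.IsWeightedHomogeneous w d) :
    (z • p).IsWeightedHomogeneous w d := by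
  rw [← Int.cast_smul_eq_zsmul ℂ]
  exact (mem_weightedHomogeneousSubmodule _ _ _ _).mp
    ((weightedHomogeneousSubmodule ℂ w d).smul_mem _
      ((mem_weightedHomogeneousSubmodule _ _ _ _).mpr hp))

lemma smul_hom {n : ℕ} {w : (Fin n ⊕ Fin n) → ℕ} {d : ℕ} (z : ℂ)
    {p : MvPolynomial (Fin n ⊕ Fin n) ℂ} (hp : p.IsWeightedHomogeneous w d) :
    (z • p).IsWeightedHomogeneous w d :=
  (mem_weightedHomogeneousSubmodule _ _ _ _).mp
    ((weightedHomogeneousSubmodule ℂ w d).smul_mem _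
      ((mem_weightedHomogeneousSubmodule _ _ _ _).mpr hp))

lemma sub_hom {n : ℕ} {w : (Fin n ⊕ Fin n) → ℕ} {d : ℕ}
    {p q : MvPolynomial (Fin n ⊕ Fin n) ℂ} (hp : p.IsWeightedHomogeneous w d)
    (hq : q.IsWeightedHomogeneous w d) : (p - q).IsWeightedHomogeneous w d :=
  (mem_weightedHomogeneousSubmodule _ _ _ _).mp
    (Submodule.sub_mem _ ((mem_weightedHomogeneousSubmodule _ _ _ _).mpr hp)
      ((mem_weightedHomogeneousSubmodule _ _ _ _).mpr hq))

lemma vWedge_hom_w {n m L : ℕ} {g : (Fin m → Fin n) → MvPolynomial (Fin n ⊕ Fin n) ℂ}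
    (hg : ∀ γ, (g γ).IsWeightedHomogeneous (wWt n) L) (γ : Fin (m+1) → Fin n) :
    ((vWedge n m g) γ).IsWeightedHomogeneous (wWt n) L := by
  rw [vWedge]
  apply IsWeightedHomogeneous.sum
  intro k _
  apply zsmul_hom
  have hx : (X (Sum.inr (γ k)) : MvPolynomial (Fin n ⊕ Fin n) ℂ).IsWeightedHomogeneous
      (wWt n) 0 := by
    have := isWeightedHomogeneous_X ℂ (wWt n) (Sum.inr (γ k))
    simpa [wWt] using this
  simpa using hx.mul (hg _)

lemma vWedge_hom_v {n m d : ℕ} {g : (Fin m → Fin n) → MvPolynomial (Fin n ⊕ Fin n) ℂ}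
    (hg : ∀ γ, (g γ).IsWeightedHomogeneous (vWt n) d) (γ : Fin (m+1) → Fin n) :
    ((vWedge n m g) γ).IsWeightedHomogeneous (vWt n) (d + 1) := by
  rw [vWedge]
  apply IsWeightedHomogeneous.sum
  intro k _
  apply zsmul_hom
  have hx : (X (Sum.inr (γ k)) : MvPolynomial (Fin n ⊕ Fin n) ℂ).IsWeightedHomogeneous
      (vWt n) 1 := by
    have := isWeightedHomogeneous_X ℂ (vWt n) (Sum.inr (γ k))
    simpa [vWt] using this
  simpa [add_comm] using hx.mul (hg _)

lemma Tr_hom_w {n m L : ℕ} {f : (Fin (m+1) → Fin n) → MvPolynomial (Fin n ⊕ Fin n) ℂ}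
    (hf : ∀ γ, (f γ).IsWeightedHomogeneous (wWt n) L) (γ' : Fin m → Fin n) :
    (Tr n m f γ').IsWeightedHomogeneous (wWt n) L := by
  rw [Tr]
  apply IsWeightedHomogeneous.sum
  intro β _
  have := isWeightedHomogeneous_pderiv (Sum.inr β) (hf (Fin.cons β γ'))
  simpa [wWt] using this

lemma Tr_hom_v {n m L' : ℕ} {f : (Fin (m+1) → Fin n) → MvPolynomial (Fin n ⊕ Fin n) ℂ}
    (hf : ∀ γ, (f γ).IsWeightedHomogeneous (vWt n) L') (γ' : Fin m → Fin n) :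
    (Tr n m f γ').IsWeightedHomogeneous (vWt n) (L' - 1) := by
  rw [Tr]
  apply IsWeightedHomogeneous.sum
  intro β _
  have := isWeightedHomogeneous_pderiv (Sum.inr β) (hf (Fin.cons β γ'))
  simpa [vWt] using this

end S14

/-- The decomposition `Φ₊ = Φ₊^{(1)} + (w̄^α χ^α)·Φ₊^{(2)}` of Appendix B: any totally
antisymmetric family `f` of bidegree `(L,L')` indexed by `F`-tuples (with
`1 ≤ F ≤ n`, `L' ≥ 1`, `F = F₀ + 1`) decomposes uniquely as `f = f⁰ + v ∧ g` with
`f⁰` trace-free of bidegree `(L,L')` and `g` totally antisymmetric trace-free of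
bidegree `(L, L'−1)` indexed by `(F−1)`-tuples. -/
theorem stmt14 (n F₀ L L' : ℕ) (hn : 1 ≤ n) (hL' : 1 ≤ L') (hF : F₀ + 1 ≤ n)
    (f : (Fin (F₀ + 1) → Fin n) → MvPolynomial (Fin n ⊕ Fin n) ℂ)
    (hfa : AntisymFam n (F₀ + 1) f)
    (hfh : ∀ γ, (f γ).IsWeightedHomogeneous (wWt n) L ∧
                (f γ).IsWeightedHomogeneous (vWt n) L') :
    ∃! fg : ((Fin (F₀ + 1) → Fin n) → MvPolynomial (Fin n ⊕ Fin n) ℂ) ×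
            ((Fin F₀ → Fin n) → MvPolynomial (Fin n ⊕ Fin n) ℂ),
      AntisymFam n (F₀ + 1) fg.1
      ∧ (∀ γ, (fg.1 γ).IsWeightedHomogeneous (wWt n) L ∧
              (fg.1 γ).IsWeightedHomogeneous (vWt n) L')
      ∧ (∀ γ' : Fin F₀ → Fin n,
          ∑ β : Fin n, pderiv (Sum.inr β) (fg.1 (Fin.cons β γ')) = 0)
      ∧ AntisymFam n F₀ fg.2
      ∧ (∀ γ, (fg.2 γ).IsWeightedHomogeneous (wWt n) L ∧
              (fg.2 γ).IsWeightedHomogeneous (vWt n) (L' - 1))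
      ∧ TraceFreeFam n F₀ fg.2
      ∧ ∀ γ, f γ = fg.1 γ + vWedge n F₀ fg.2 γ := by
  classical
  open S14 in
  set d : ℕ := L' - 1 with hd
  have hdL : d + 1 = L' := by omega
  set c : ℂ := (n : ℂ) + (d : ℂ) - (F₀ : ℂ) with hc
  have hcnat : c = ((n + d - F₀ : ℕ) : ℂ) := by
    rw [hc]
    have h1 : (F₀ : ℕ) ≤ n + d := by omega
    push_cast [Nat.cast_sub h1]
    ring
  have hc0 : c ≠ 0 := by
    rw [hcnat]
    have h : n + d - F₀ ≠ 0 := by omega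
    exact_mod_cast Nat.cast_ne_zero.mpr h
  set g : (Fin F₀ → Fin n) → MvPolynomial (Fin n ⊕ Fin n) ℂ :=
    fun γ' => c⁻¹ • S14.Tr n F₀ f γ' with hgdef
  -- properties of Tr f
  have hTa : AntisymFam n F₀ (S14.Tr n F₀ f) := S14.Tr_antisym hfa
  have hTt : TraceFreeFam n F₀ (S14.Tr n F₀ f) := S14.Tr_traceFree hfa
  -- properties of g
  have hga : AntisymFam n F₀ g := by
    intro σ γ'
    rw [hgdef]
    simp only
    rw [hTa σ γ', smul_comm]
  have hgt : TraceFreeFam n F₀ g := by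
    intro γ' i
    have : ∀ β : Fin n, pderiv (Sum.inr β) (g (Function.update γ' i β))
        = c⁻¹ • pderiv (Sum.inr β) (S14.Tr n F₀ f (Function.update γ' i β)) := by
      intro β
      rw [hgdef]
      simp only
      rw [Derivation.map_smul]
    rw [Finset.sum_congr rfl (fun β _ => this β), ← Finset.smul_sum, hTt γ' i, smul_zero]
  have hgh : ∀ γ', (g γ').IsWeightedHomogeneous (wWt n) L ∧
      (g γ').IsWeightedHomogeneous (vWt n) (L' - 1) := by
    intro γ'
    constructor
    · exact S14.smul_hom _ (S14.Tr_hom_w (fun γ => (hfh γ).1) γ')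
    · exact S14.smul_hom _ (S14.Tr_hom_v (fun γ => (hfh γ).2) γ')
  have hghv : ∀ γ', (g γ').IsWeightedHomogeneous (vWt n) d := fun γ' => (hgh γ').2
  have hTrW : ∀ γ', S14.Tr n F₀ (vWedge n F₀ g) γ' = c • g γ' := by
    intro γ'
    rw [S14.Tr_vWedge hga hgt hghv γ', hc]
  have hTrWf : ∀ γ', S14.Tr n F₀ (vWedge n F₀ g) γ' = S14.Tr n F₀ f γ' := by
    intro γ'
    rw [hTrW γ', hgdef]
    simp only
    rw [smul_inv_smul₀ hc0]
  set f0 : (Fin (F₀ + 1) → Fin n) → MvPolynomial (Fin n ⊕ Fin n) ℂ :=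
    fun γ => f γ - vWedge n F₀ g γ with hf0def
  have hWa : AntisymFam n (F₀ + 1) (vWedge n F₀ g) := S14.vWedge_antisym hga
  refine ⟨(f0, g), ⟨?_, ?_, ?_, hga, hgh, hgt, ?_⟩, ?_⟩
  · -- antisym of f0
    intro σ γ
    rw [hf0def]
    simp only
    rw [hfa σ γ, hWa σ γ, smul_sub]
  · -- homogeneity of f0
    intro γ
    rw [hf0def]
    simp only
    constructor
    · exact S14.sub_hom (hfh γ).1 (S14.vWedge_hom_w (fun γ' => (hgh γ').1) γ)
    · refine S14.sub_hom (hfh γ).2 ?_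
      have := S14.vWedge_hom_v hghv γ
      rwa [hdL] at this
  · -- trace of f0
    intro γ'
    have : ∀ β : Fin n, pderiv (Sum.inr β) (f0 (Fin.cons β γ'))
        = pderiv (Sum.inr β) (f (Fin.cons β γ'))
          - pderiv (Sum.inr β) (vWedge n F₀ g (Fin.cons β γ')) := by
      intro β
      rw [hf0def]
      simp only
      rw [map_sub]
    rw [Finset.sum_congr rfl (fun β _ => this β), Finset.sum_sub_distrib]
    have h1 : ∑ β : Fin n, pderiv (Sum.inr β) (f (Fin.cons β γ')) = S14.Tr n F₀ f γ' := rfl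
    have h2 : ∑ β : Fin n, pderiv (Sum.inr β) (vWedge n F₀ g (Fin.cons β γ'))
        = S14.Tr n F₀ (vWedge n F₀ g) γ' := rfl
    rw [h1, h2, hTrWf γ', sub_self]
  · -- decomposition
    intro γ
    rw [hf0def]
    simp only
    rw [sub_add_cancel]
  · -- uniqueness
    rintro ⟨p, q⟩ ⟨hpa, hph, hpt, hqa, hqh, hqt, hdecomp⟩
    have hqhv : ∀ γ', (q γ').IsWeightedHomogeneous (vWt n) d := fun γ' => (hqh γ').2
    have hq : q = g := by
      funext γ'
      have h1 : S14.Tr n F₀ f γ' = c • q γ' := by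
        have expand : ∀ β : Fin n, pderiv (Sum.inr β) (f (Fin.cons β γ'))
            = pderiv (Sum.inr β) (p (Fin.cons β γ'))
              + pderiv (Sum.inr β) (vWedge n F₀ q (Fin.cons β γ')) := by
          intro β
          rw [hdecomp (Fin.cons β γ'), map_add]
        have : S14.Tr n F₀ f γ' = (∑ β : Fin n, pderiv (Sum.inr β) (p (Fin.cons β γ')))
            + S14.Tr n F₀ (vWedge n F₀ q) γ' := by
          rw [S14.Tr]
          rw [Finset.sum_congr rfl (fun β _ => expand β), Finset.sum_add_distrib]
          rfl
        rw [this, hpt γ', zero_add, S14.Tr_vWedge hqa hqt hqhv γ', hc]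
      rw [hgdef]
      simp only
      rw [h1, inv_smul_smul₀ hc0]
    have hp : p = f0 := by
      funext γ
      rw [hf0def]
      simp only
      rw [hdecomp γ, hq]
      ring
    rw [Prod.mk.injEq]
    exact ⟨hp, hq⟩
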